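/- Let Q be a finite acyclic quiver, A = kQ, and V_i finite-dimensional k-vector spaces. Then End_{A \otimes A^{op}}(M(V_*)) \cong \bigoplus_{i \in Q_0} End_k(V_i) as k-algebras, where M(V_*) = \bigoplus_i A e_i \otimes V_i \otimes e_i A. -/

import Mathlib

/- STATEMENT 7: Let Q be a finite acyclic quiver, A = kQ, and V_i finite-dimensional
k-vector spaces. Then End_{A ⊗ A^op}(M(V_*)) ≅ ⊕_{i ∈ Q_0} End_k(V_i) as k-algebras,
where M(V_*) = ⊕_i A e_i ⊗ V_i ⊗ e_i A.

The bimodule M(V_*) is modeled by its components M(V_*)_{a,b} = ⊕_{(p,ω : p⇝a,ω' : b⇝p)} V_p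
with structure maps the inclusions of direct summands; bimodule endomorphisms are families
of linear maps on the components commuting with all structure maps, with multiplication
given by componentwise composition.  The statement provides a k-linear equivalence which is
moreover unital and multiplicative, i.e. an isomorphism of k-algebras. -/

open Quiver DirectSum

set_option synthInstance.maxHeartbeats 400000
set_option maxHeartbeats 1000000

/-- Index of the direct summands of `M(V_*)_{a,b}`. -/
abbrev MIdx (Q : Type) [Quiver.{0} Q] (a b : Q) : Type := Σ p : Q, Path p a × Path b p

/-- The component `M(V_*)_{a,b}`. -/
abbrev Mc (F : Type) [Field F] (Q : Type) [Quiver.{0} Q]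
    (V : Q → Type) [∀ p, AddCommGroup (V p)] [∀ p, Module F (V p)] (a b : Q) : Type :=
  ⨁ (t : MIdx Q a b), V t.1

open scoped Classical in
/-- Left structure map of `M(V_*)` along `γ : a ⟶ a'`. -/
noncomputable def MlAct (F : Type) [Field F] (Q : Type) [Quiver.{0} Q]
    (V : Q → Type) [∀ p, AddCommGroup (V p)] [∀ p, Module F (V p)]
    {a a' : Q} (γ : a ⟶ a') (b : Q) : Mc F Q V a b →ₗ[F] Mc F Q V a' b :=
  DirectSum.toModule F (MIdx Q a b) _ fun t =>
    DirectSum.lof F (MIdx Q a' b) (fun s => V s.1) ⟨t.1, t.2.1.cons γ, t.2.2⟩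

open scoped Classical in
/-- Right structure map of `M(V_*)` along `δ : b' ⟶ b`. -/
noncomputable def MrAct (F : Type) [Field F] (Q : Type) [Quiver.{0} Q]
    (V : Q → Type) [∀ p, AddCommGroup (V p)] [∀ p, Module F (V p)]
    (a : Q) {b b' : Q} (δ : b' ⟶ b) : Mc F Q V a b →ₗ[F] Mc F Q V a b' :=
  DirectSum.toModule F (MIdx Q a b) _ fun t =>
    DirectSum.lof F (MIdx Q a b') (fun s => V s.1) ⟨t.1, t.2.1, (δ.toPath).comp t.2.2⟩

/-- The space of bimodule endomorphisms of `M(V_*)`. -/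
noncomputable def bimodEndM (F : Type) [Field F] (Q : Type) [Quiver.{0} Q]
    (V : Q → Type) [∀ p, AddCommGroup (V p)] [∀ p, Module F (V p)] :
    Submodule F (∀ a b : Q, Mc F Q V a b →ₗ[F] Mc F Q V a b) where
  carrier := {f |
    (∀ (a a' b : Q) (γ : a ⟶ a'),
      (MlAct F Q V γ b).comp (f a b) = (f a' b).comp (MlAct F Q V γ b)) ∧
    (∀ (a b b' : Q) (δ : b' ⟶ b),
      (MrAct F Q V a δ).comp (f a b) = (f a b').comp (MrAct F Q V a δ))}
  add_mem' := by
    rintro f g ⟨hf1, hf2⟩ ⟨hg1, hg2⟩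
    refine ⟨fun a a' b γ => ?_, fun a b b' δ => ?_⟩
    · simp [LinearMap.comp_add, LinearMap.add_comp, hf1 a a' b γ, hg1 a a' b γ]
    · simp [LinearMap.comp_add, LinearMap.add_comp, hf2 a b b' δ, hg2 a b b' δ]
  zero_mem' := by
    refine ⟨fun a a' b γ => ?_, fun a b b' δ => ?_⟩ <;> simp
  smul_mem' := by
    rintro c f ⟨h1, h2⟩
    refine ⟨fun a a' b γ => ?_, fun a b b' δ => ?_⟩
    · simp [LinearMap.comp_smul, LinearMap.smul_comp, h1 a a' b γ]
    · simp [LinearMap.comp_smul, LinearMap.smul_comp, h2 a b b' δ]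

section Aux

open scoped Classical

variable (F : Type) [Field F] (Q : Type) [Quiver.{0} Q]
  (V : Q → Type) [∀ p, AddCommGroup (V p)] [∀ p, Module F (V p)]

/-- Iterated left structure map along a path. -/
noncomputable def MlPath : ∀ {a a' : Q}, Path a a' → ∀ b : Q,
    Mc F Q V a b →ₗ[F] Mc F Q V a' b
  | _, _, Path.nil, _ => LinearMap.id
  | _, _, Path.cons ω γ, b => (MlAct F Q V γ b).comp (MlPath ω b)

/-- Iterated right structure map along a path. -/
noncomputable def MrPath (a : Q) : ∀ {b' b : Q}, Path b' b →
    Mc F Q V a b →ₗ[F] Mc F Q V a b'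
  | _, _, Path.nil => LinearMap.id
  | _, _, Path.cons ρ γ => (MrPath a ρ).comp (MrAct F Q V a γ)

lemma MlAct_lof {a a' : Q} (γ : a ⟶ a') (b : Q) (p : Q) (σ : Path p a) (τ : Path b p)
    (v : V p) :
    MlAct F Q V γ b (lof F (MIdx Q a b) (fun t => V t.1) ⟨p, σ, τ⟩ v) =
      lof F (MIdx Q a' b) (fun t => V t.1) ⟨p, σ.cons γ, τ⟩ v := by
  simpa [MlAct] using
    DirectSum.toModule_lof F (⟨p, σ, τ⟩ : MIdx Q a b) v

lemma MrAct_lof (a : Q) {b b' : Q} (δ : b' ⟶ b) (p : Q) (σ : Path p a) (τ : Path b p)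
    (v : V p) :
    MrAct F Q V a δ (lof F (MIdx Q a b) (fun t => V t.1) ⟨p, σ, τ⟩ v) =
      lof F (MIdx Q a b') (fun t => V t.1) ⟨p, σ, (δ.toPath).comp τ⟩ v := by
  simpa [MrAct] using
    DirectSum.toModule_lof F (⟨p, σ, τ⟩ : MIdx Q a b) v

lemma MlPath_lof {a a' : Q} (ω : Path a a') (b : Q) (p : Q) (σ : Path p a) (τ : Path b p)
    (v : V p) :
    MlPath F Q V ω b (lof F (MIdx Q a b) (fun t => V t.1) ⟨p, σ, τ⟩ v) =
      lof F (MIdx Q a' b) (fun t => V t.1) ⟨p, σ.comp ω, τ⟩ v := by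
  induction ω with
  | nil => simp [MlPath]
  | cons ω γ ih => simp [MlPath, ih, MlAct_lof]

lemma MrPath_lof (a : Q) {b' b : Q} (ρ : Path b' b) (p : Q) (σ : Path p a) (τ : Path b p)
    (v : V p) :
    MrPath F Q V a ρ (lof F (MIdx Q a b) (fun t => V t.1) ⟨p, σ, τ⟩ v) =
      lof F (MIdx Q a b') (fun t => V t.1) ⟨p, σ, ρ.comp τ⟩ v := by
  induction ρ with
  | nil => rw [Quiver.Path.nil_comp]; simp [MrPath]
  | cons ρ γ ih =>
      simp only [MrPath, LinearMap.comp_apply, MrAct_lof, ih]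
      congr 2
      simp [Quiver.Hom.toPath, ← Quiver.Path.comp_assoc, Quiver.Path.comp_cons,
        Quiver.Path.comp_nil]

lemma comm_MlPath {f : ∀ a b : Q, Mc F Q V a b →ₗ[F] Mc F Q V a b}
    (hf : f ∈ bimodEndM F Q V) {a a' : Q} (ω : Path a a') (b : Q) :
    (MlPath F Q V ω b).comp (f a b) = (f a' b).comp (MlPath F Q V ω b) := by
  induction ω with
  | nil => simp [MlPath]
  | cons ω γ ih =>
      simp only [MlPath, LinearMap.comp_assoc, ih]
      rw [← LinearMap.comp_assoc, hf.1 _ _ _ γ, LinearMap.comp_assoc]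

lemma comm_MrPath {f : ∀ a b : Q, Mc F Q V a b →ₗ[F] Mc F Q V a b}
    (hf : f ∈ bimodEndM F Q V) (a : Q) {b' b : Q} (ρ : Path b' b) :
    (MrPath F Q V a ρ).comp (f a b) = (f a b').comp (MrPath F Q V a ρ) := by
  induction ρ with
  | nil => simp [MrPath]
  | cons ρ γ ih =>
      simp only [MrPath, LinearMap.comp_assoc]
      rw [hf.2 _ _ _ γ, ← LinearMap.comp_assoc, ih, LinearMap.comp_assoc]

lemma midx_eq (hacyclic : ∀ (a : Q) (p : Path a a), p = Path.nil) (p : Q)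
    (t : MIdx Q p p) : t = ⟨p, Path.nil, Path.nil⟩ := by
  obtain ⟨q, σ, τ⟩ := t
  have hlen : (τ.comp σ).length = 0 := by rw [hacyclic p (τ.comp σ)]; rfl
  rw [Quiver.Path.length_comp] at hlen
  have hσ : σ.length = 0 := by omega
  have hτ : τ.length = 0 := by omega
  obtain rfl := σ.eq_of_length_zero hσ
  obtain rfl := σ.eq_nil_of_length_zero hσ
  obtain rfl := τ.eq_nil_of_length_zero hτ
  rfl

lemma diag_idem (hacyclic : ∀ (a : Q) (p : Path a a), p = Path.nil) (p : Q) :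
    (lof F (MIdx Q p p) (fun t => V t.1) ⟨p, Path.nil, Path.nil⟩).comp
      (DirectSum.component F (MIdx Q p p) (fun t => V t.1) ⟨p, Path.nil, Path.nil⟩) =
      LinearMap.id := by
  apply DirectSum.linearMap_ext
  intro t
  obtain rfl := midx_eq Q hacyclic p t
  ext v
  simp

lemma decomp (hacyclic : ∀ (a : Q) (p : Path a a), p = Path.nil) (p : Q)
    (x : Mc F Q V p p) :
    x = lof F (MIdx Q p p) (fun t => V t.1) ⟨p, Path.nil, Path.nil⟩
      (DirectSum.component F (MIdx Q p p) (fun t => V t.1) ⟨p, Path.nil, Path.nil⟩ x) := by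
  have h := congrArg (fun g => g x) (diag_idem F Q V hacyclic p)
  simpa using h.symm

/-- The component of an endomorphism at vertex `i`. -/
noncomputable def eC (f : ∀ a b : Q, Mc F Q V a b →ₗ[F] Mc F Q V a b) (i : Q) :
    V i →ₗ[F] V i :=
  (DirectSum.component F (MIdx Q i i) (fun t => V t.1) ⟨i, Path.nil, Path.nil⟩).comp
    ((f i i).comp (lof F (MIdx Q i i) (fun t => V t.1) ⟨i, Path.nil, Path.nil⟩))

/-- The diagonal endomorphism associated to a family `φ`. -/
noncomputable def diag (φ : ∀ i : Q, V i →ₗ[F] V i) (a b : Q) :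
    Mc F Q V a b →ₗ[F] Mc F Q V a b :=
  DirectSum.toModule F (MIdx Q a b) _ fun t =>
    (lof F (MIdx Q a b) (fun s => V s.1) t).comp (φ t.1)

lemma diag_lof (φ : ∀ i : Q, V i →ₗ[F] V i) (a b : Q) (t : MIdx Q a b) (v : V t.1) :
    diag F Q V φ a b (lof F (MIdx Q a b) (fun s => V s.1) t v) =
      lof F (MIdx Q a b) (fun s => V s.1) t (φ t.1 v) := by
  simpa [diag] using DirectSum.toModule_lof F t v

lemma diag_mem (φ : ∀ i : Q, V i →ₗ[F] V i) : diag F Q V φ ∈ bimodEndM F Q V := by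
  constructor
  · intro a a' b γ
    apply DirectSum.linearMap_ext
    rintro ⟨p, σ, τ⟩
    ext v
    simp [diag_lof, MlAct_lof]
  · intro a b b' δ
    apply DirectSum.linearMap_ext
    rintro ⟨p, σ, τ⟩
    ext v
    simp [diag_lof, MrAct_lof]

lemma f_apply_lof (hacyclic : ∀ (a : Q) (p : Path a a), p = Path.nil)
    {f : ∀ a b : Q, Mc F Q V a b →ₗ[F] Mc F Q V a b} (hf : f ∈ bimodEndM F Q V)
    (a b : Q) (p : Q) (ω : Path p a) (ω' : Path b p) (v : V p) :
    f a b (lof F (MIdx Q a b) (fun s => V s.1) ⟨p, ω, ω'⟩ v) =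
      lof F (MIdx Q a b) (fun s => V s.1) ⟨p, ω, ω'⟩ (eC F Q V f p v) := by
  have key : lof F (MIdx Q a b) (fun s => V s.1) ⟨p, ω, ω'⟩ v =
      MlPath F Q V ω b (MrPath F Q V p ω'
        (lof F (MIdx Q p p) (fun s => V s.1) ⟨p, Path.nil, Path.nil⟩ v)) := by
    rw [MrPath_lof, MlPath_lof, Quiver.Path.nil_comp, Quiver.Path.comp_nil]
  rw [key]
  have h1 := congrArg (fun g => g (MrPath F Q V p ω'
    (lof F (MIdx Q p p) (fun s => V s.1) ⟨p, Path.nil, Path.nil⟩ v)))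
    (comm_MlPath F Q V hf ω b)
  simp only [LinearMap.comp_apply] at h1
  rw [← h1]
  have h2 := congrArg (fun g => g
    (lof F (MIdx Q p p) (fun s => V s.1) ⟨p, Path.nil, Path.nil⟩ v))
    (comm_MrPath F Q V hf p ω')
  simp only [LinearMap.comp_apply] at h2
  rw [← h2]
  have h3 : f p p (lof F (MIdx Q p p) (fun s => V s.1) ⟨p, Path.nil, Path.nil⟩ v) =
      lof F (MIdx Q p p) (fun s => V s.1) ⟨p, Path.nil, Path.nil⟩ (eC F Q V f p v) := by
    rw [decomp F Q V hacyclic p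
      (f p p (lof F (MIdx Q p p) (fun s => V s.1) ⟨p, Path.nil, Path.nil⟩ v))]
    rfl
  rw [h3, MrPath_lof, MlPath_lof, Quiver.Path.nil_comp, Quiver.Path.comp_nil]

lemma diag_eC (hacyclic : ∀ (a : Q) (p : Path a a), p = Path.nil)
    {f : ∀ a b : Q, Mc F Q V a b →ₗ[F] Mc F Q V a b} (hf : f ∈ bimodEndM F Q V) :
    diag F Q V (eC F Q V f) = f := by
  funext a b
  apply DirectSum.linearMap_ext
  rintro ⟨p, ω, ω'⟩
  ext v
  simp only [LinearMap.comp_apply, diag_lof, f_apply_lof F Q V hacyclic hf]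

lemma eC_diag (φ : ∀ i : Q, V i →ₗ[F] V i) : eC F Q V (diag F Q V φ) = φ := by
  funext i
  ext v
  simp [eC, diag_lof]

end Aux

/-- `End_{A ⊗ A^op}(M(V_*)) ≅ ⊕_{i ∈ Q_0} End_k(V_i)` as `k`-algebras:
there is a `k`-linear equivalence which is moreover multiplicative and unital (composition
of bimodule endomorphisms corresponds to componentwise composition). -/
theorem bimodEndM_iso (F : Type) [Field F] (Q : Type) [Quiver.{0} Q]
    [Fintype Q] [∀ a b : Q, Fintype (a ⟶ b)]
    (hacyclic : ∀ (a : Q) (p : Path a a), p = Path.nil)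
    (V : Q → Type) [∀ p, AddCommGroup (V p)] [∀ p, Module F (V p)]
    [∀ p, FiniteDimensional F (V p)] :
    ∃ e : ↥(bimodEndM F Q V) ≃ₗ[F] (∀ i : Q, V i →ₗ[F] V i),
      (∀ f g : ↥(bimodEndM F Q V), ∃ h : ↥(bimodEndM F Q V),
        (∀ a b : Q, h.val a b = (f.val a b).comp (g.val a b)) ∧
        (∀ i : Q, e h i = (e f i).comp (e g i))) ∧
      (∃ one : ↥(bimodEndM F Q V),
        (∀ a b : Q, one.val a b = LinearMap.id) ∧
        (∀ i : Q, e one i = LinearMap.id)) := by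
  classical
  have diag_add : ∀ φ ψ : ∀ i : Q, V i →ₗ[F] V i,
      diag F Q V (φ + ψ) = diag F Q V φ + diag F Q V ψ := by
    intro φ ψ
    funext a b
    apply DirectSum.linearMap_ext
    rintro t
    ext v
    simp [diag_lof]
  have diag_smul : ∀ (c : F) (φ : ∀ i : Q, V i →ₗ[F] V i),
      diag F Q V (c • φ) = c • diag F Q V φ := by
    intro c φ
    funext a b
    apply DirectSum.linearMap_ext
    rintro t
    ext v
    simp [diag_lof]
  let eLin : ↥(bimodEndM F Q V) →ₗ[F] (∀ i : Q, V i →ₗ[F] V i) :=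
    { toFun := fun f => eC F Q V f.val
      map_add' := fun f g => by
        funext i; ext v; simp [eC]
      map_smul' := fun c f => by
        funext i; ext v; simp [eC] }
  let dLin : (∀ i : Q, V i →ₗ[F] V i) →ₗ[F] ↥(bimodEndM F Q V) :=
    { toFun := fun φ => ⟨diag F Q V φ, diag_mem F Q V φ⟩
      map_add' := fun φ ψ => Subtype.ext (diag_add φ ψ)
      map_smul' := fun c φ => Subtype.ext (diag_smul c φ) }
  refine ⟨LinearEquiv.ofLinear eLin dLin
    (LinearMap.ext fun φ => eC_diag F Q V φ)
    (LinearMap.ext fun f => Subtype.ext (diag_eC F Q V hacyclic f.2)), ?_, ?_⟩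
  · intro f g
    refine ⟨⟨fun a b => (f.val a b).comp (g.val a b), ?_, ?_⟩, fun a b => rfl, ?_⟩
    · intro a a' b γ
      rw [← LinearMap.comp_assoc, f.2.1 a a' b γ, LinearMap.comp_assoc,
        g.2.1 a a' b γ, ← LinearMap.comp_assoc]
    · intro a b b' δ
      rw [← LinearMap.comp_assoc, f.2.2 a b b' δ, LinearMap.comp_assoc,
        g.2.2 a b b' δ, ← LinearMap.comp_assoc]
    · intro i
      ext v
      have hg := f_apply_lof F Q V hacyclic g.2 i i i Path.nil Path.nil v
      simp only [LinearEquiv.ofLinear_apply, LinearMap.coe_mk, AddHom.coe_mk,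
        LinearMap.comp_apply, eC, eLin]
      rw [hg]
      simp [eC]
  · refine ⟨⟨fun a b => LinearMap.id, ?_, ?_⟩, fun a b => rfl, ?_⟩
    · intro a a' b γ; simp
    · intro a b b' δ; simp
    · intro i
      ext v
      simp [eLin, eC]
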